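/- Let p be an odd prime, s ≥ 1, r an integer, and S_1(n,r) = p^{−⌊(n−1)/(p−1)⌋} · Σ_{k ≡ r (mod p), 0≤k≤n} (−1)^k C(n,k). If n = (p−1)s − 1, then S_1(n,r) ≡ (−1)^{s−1}·((s+1)/2 + r) (mod p), where (s+1)/2 denotes the inverse of 2 times (s+1) in F_p. -/

import Mathlib

open Finset

/-- `∑_{k ≡ r (mod p), 0 ≤ k ≤ n} (-1)^k C(n,k)`. -/
def S1sum (p n : ℕ) (r : ℤ) : ℤ :=
  ∑ k ∈ Finset.range (n + 1), if (k : ℤ) ≡ r [ZMOD p] then (-1) ^ k * (n.choose k : ℤ) else 0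

/-- `S_1(n,r) = p^{-⌊(n-1)/(p-1)⌋} ∑_{k ≡ r (p)} (-1)^k C(n,k)`. -/
def S1 (p n : ℕ) (r : ℤ) : ℤ := S1sum p n r / (p : ℤ) ^ ((n - 1) / (p - 1))

namespace Stmt12

/-- indicator-signed coefficient -/
def g (p k : ℕ) (x : ZMod p) : ℤ := if ((k : ZMod p) = x) then (-1) ^ k else 0

/-- the sum as a function of the residue class -/
def T (p n : ℕ) (x : ZMod p) : ℤ := ∑ k ∈ range (n + 1), g p k x * (n.choose k : ℤ)

/-- difference operator -/
def D (p : ℕ) (f : ZMod p → ℤ) : ZMod p → ℤ := fun x => f x - f (x - 1)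

lemma S1sum_eq_T (p n : ℕ) (r : ℤ) : S1sum p n r = T p n (r : ZMod p) := by
  unfold S1sum T g
  refine Finset.sum_congr rfl fun k hk => ?_
  rw [ite_mul, zero_mul]
  congr 1
  have : ((k : ℤ) : ZMod p) = ((r : ℤ) : ZMod p) ↔ (k : ℤ) ≡ r [ZMOD p] :=
    ZMod.intCast_eq_intCast_iff _ _ _
  simp only [Int.cast_natCast] at this
  rw [eq_iff_iff, ← this]

lemma g_succ (p k : ℕ) (x : ZMod p) : g p (k + 1) x = - g p k (x - 1) := by
  unfold g
  have : (((k : ℕ) + 1 : ℕ) : ZMod p) = x ↔ ((k : ℕ) : ZMod p) = x - 1 := by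
    push_cast
    constructor
    · intro h; rw [← h]; ring
    · intro h; rw [h]; ring
  by_cases hc : ((k : ℕ) : ZMod p) = x - 1
  · rw [if_pos (this.mpr hc), if_pos hc]; ring
  · rw [if_neg (fun hh => hc (this.mp hh)), if_neg hc]; ring

lemma T_succ (p n : ℕ) (x : ZMod p) : T p (n + 1) x = T p n x - T p n (x - 1) := by
  have expand : T p (n + 1) x = ∑ k ∈ range (n + 1 + 1), g p k x * (((n+1).choose k : ℕ) : ℤ) := rfl
  rw [expand, Finset.sum_range_succ' (fun k => g p k x * (((n+1).choose k : ℕ) : ℤ)) (n+1)]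
  have step : ∀ k, g p (k+1) x * (((n+1).choose (k+1) : ℕ) : ℤ)
      = - g p k (x-1) * (n.choose k : ℤ) + g p (k+1) x * (n.choose (k+1) : ℤ) := by
    intro k
    rw [Nat.choose_succ_succ' n k]
    push_cast
    rw [g_succ]
    ring
  rw [Finset.sum_congr rfl (fun k _ => step k)]
  rw [Finset.sum_add_distrib]
  have h2 : (∑ k ∈ range (n+1), g p (k+1) x * ((n.choose (k+1) : ℕ) : ℤ))
      + g p 0 x * ((n.choose 0 : ℕ) : ℤ) = T p n x := by
    rw [← Finset.sum_range_succ' (fun k => g p k x * ((n.choose k : ℕ) : ℤ)) (n+1)]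
    have expand2 : T p n x = ∑ k ∈ range (n + 1), g p k x * ((n.choose k : ℕ) : ℤ) := rfl
    rw [expand2, Finset.sum_range_succ (fun k => g p k x * ((n.choose k : ℕ) : ℤ)) (n+1),
      Nat.choose_succ_self]
    push_cast
    ring
  have h1 : (∑ k ∈ range (n+1), - g p k (x-1) * (n.choose k : ℤ)) = - T p n (x-1) := by
    have expand3 : T p n (x-1) = ∑ k ∈ range (n + 1), g p k (x-1) * ((n.choose k : ℕ) : ℤ) := rfl
    rw [expand3, ← Finset.sum_neg_distrib]
    refine Finset.sum_congr rfl fun k _ => by ring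
  simp only [Nat.choose_zero_right] at h2 ⊢
  rw [add_assoc, h1, h2]
  ring

lemma T_add (p : ℕ) (m : ℕ) : ∀ n, T p (n + m) = (D p)^[m] (T p n) := by
  induction m with
  | zero => intro n; simp
  | succ m ih =>
    intro n
    have hD : D p (T p n) = T p (n + 1) := by
      funext x
      unfold D
      rw [T_succ]
    have harith : n + (m + 1) = (n + 1) + m := by omega
    rw [harith, ih (n+1), ← hD, Function.iterate_succ_apply]

lemma D_iterate (p : ℕ) (m : ℕ) : ∀ (f : ZMod p → ℤ) (x : ZMod p),
    (D p)^[m] f x = ∑ k ∈ range (m + 1), (-1) ^ k * (m.choose k : ℤ) * f (x - (k : ZMod p)) := by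
  induction m with
  | zero => intro f x; simp
  | succ m ih =>
    intro f x
    rw [Function.iterate_succ_apply', D, ih f x, ih f (x - 1)]
    rw [Finset.sum_range_succ' (fun k => (-1)^k * ((m+1).choose k : ℤ) * f (x - (k : ZMod p))) (m+1)]
    have step : ∀ k, (-1)^(k+1) * (((m+1).choose (k+1) : ℕ) : ℤ) * f (x - ((k+1 : ℕ) : ZMod p))
        = - ((-1)^k * (m.choose k : ℤ) * f (x - 1 - (k : ZMod p)))
          + (-1)^(k+1) * (m.choose (k+1) : ℤ) * f (x - ((k+1 : ℕ) : ZMod p)) := by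
      intro k
      rw [Nat.choose_succ_succ' m k]
      have hx : x - ((k+1 : ℕ) : ZMod p) = x - 1 - (k : ZMod p) := by
        push_cast; ring
      rw [hx]
      push_cast
      ring
    rw [Finset.sum_congr rfl (fun k _ => step k), Finset.sum_add_distrib]
    have h2 : (∑ k ∈ range (m+1), (-1)^(k+1) * (m.choose (k+1) : ℤ) * f (x - ((k+1 : ℕ) : ZMod p)))
        + (-1)^0 * ((m.choose 0 : ℕ) : ℤ) * f (x - ((0 : ℕ) : ZMod p))
        = ∑ k ∈ range (m+1), (-1)^k * (m.choose k : ℤ) * f (x - (k : ZMod p)) := by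
      rw [← Finset.sum_range_succ' (fun k => (-1)^k * (m.choose k : ℤ) * f (x - (k:ZMod p))) (m+1)]
      rw [Finset.sum_range_succ (fun k => (-1)^k * (m.choose k : ℤ) * f (x - (k:ZMod p))) (m+1),
        Nat.choose_succ_self]
      push_cast
      ring
    have h1 : (∑ k ∈ range (m+1), - ((-1)^k * (m.choose k : ℤ) * f (x - 1 - (k : ZMod p))))
        = - ∑ k ∈ range (m+1), (-1)^k * (m.choose k : ℤ) * f (x - 1 - (k : ZMod p)) := by
      rw [← Finset.sum_neg_distrib]
    simp only [Nat.choose_zero_right] at h2 ⊢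
    rw [add_assoc, h1, h2]
    ring

lemma sum_T (p : ℕ) [NeZero p] (n : ℕ) : ∑ x : ZMod p, T p (n + 1) x = 0 := by
  have : ∀ x : ZMod p, T p (n+1) x = T p n x - T p n (x - 1) := T_succ p n
  rw [Fintype.sum_congr _ _ this, Finset.sum_sub_distrib]
  rw [Fintype.sum_equiv (Equiv.subRight (1 : ZMod p)) (fun x => T p n (x - 1)) (T p n)
    (fun x => rfl)]
  ring

lemma sum_shift (p : ℕ) [NeZero p] (f : ZMod p → ℤ) (x : ZMod p) :
    ∑ k ∈ range p, f (x - (k : ZMod p)) = ∑ y : ZMod p, f y := by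
  refine Finset.sum_nbij' (fun k => x - (k : ZMod p)) (fun y => (x - y).val) ?_ ?_ ?_ ?_ ?_
  · intro a _; exact Finset.mem_univ _
  · intro y _; exact Finset.mem_range.mpr (ZMod.val_lt _)
  · intro a ha
    show (x - (x - (a : ZMod p))).val = a
    rw [sub_sub_cancel, ZMod.val_natCast_of_lt (Finset.mem_range.mp ha)]
  · intro y _
    show x - (((x - y).val : ℕ) : ZMod p) = y
    rw [ZMod.natCast_rightInverse (x - y), sub_sub_cancel]
  · intro a _; rfl


section Arith

variable (p : ℕ) [Fact p.Prime]

lemma nat_ne_zero {k : ℕ} (hk0 : k ≠ 0) (hk : k < p) : ((k : ZMod p)) ≠ 0 := by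
  rw [Ne, ZMod.natCast_eq_zero_iff]
  intro hdvd
  have := Nat.le_of_dvd (Nat.pos_of_ne_zero hk0) hdvd
  omega

lemma cast_p_sub (j : ℕ) (hj : j ≤ p) : ((p - j : ℕ) : ZMod p) = - (j : ZMod p) := by
  rw [Nat.cast_sub hj, ZMod.natCast_self]
  ring

lemma V1 : ∀ k, k < p → (-1 : ZMod p)^k * (((p-1).choose k : ℕ) : ZMod p) = 1 := by
  have hp : p.Prime := Fact.out
  intro k
  induction k with
  | zero => intro _; simp
  | succ k ih =>
    intro hk
    have hk' : k < p := by omega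
    have hp1 : 1 ≤ p := hp.one_le
    have key := congrArg (fun t : ℕ => (t : ZMod p)) (Nat.choose_succ_right_eq (p-1) k)
    simp only [Nat.cast_mul] at key
    have hc : ((p - 1 - k : ℕ) : ZMod p) = -1 - (k : ZMod p) := by
      have h1 : p - 1 - k = p - (1 + k) := by omega
      rw [h1, cast_p_sub p (1+k) (by omega)]
      push_cast
      ring
    rw [hc] at key
    push_cast at key
    have hne : ((k : ZMod p) + 1) ≠ 0 := by
      have := nat_ne_zero p (k := k+1) (by omega) hk
      push_cast at this
      exact this
    have ih' := ih hk'
    apply mul_right_cancel₀ hne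
    rw [one_mul]
    linear_combination (-(-1:ZMod p)^k) * key + ((1:ZMod p) + (k : ZMod p)) * ih'

lemma V2 : ∀ k, k < p → (-1 : ZMod p)^k * (((p-2).choose k : ℕ) : ZMod p) = (k : ZMod p) + 1 := by
  have hp : p.Prime := Fact.out
  intro k
  induction k with
  | zero => intro _; simp
  | succ k ih =>
    intro hk
    have hk' : k < p := by omega
    have hp2 : 2 ≤ p := hp.two_le
    have key := congrArg (fun t : ℕ => (t : ZMod p)) (Nat.choose_succ_right_eq (p-2) k)
    simp only [Nat.cast_mul] at key
    have hc : ((p - 2 - k : ℕ) : ZMod p) = -2 - (k : ZMod p) := by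
      have h1 : p - 2 - k = p - (2 + k) := by omega
      rw [h1, cast_p_sub p (2+k) (by omega)]
      push_cast
      ring
    rw [hc] at key
    push_cast at key
    have hne : ((k : ZMod p) + 1) ≠ 0 := by
      have := nat_ne_zero p (k := k+1) (by omega) hk
      push_cast at this
      exact this
    have ih' := ih hk'
    apply mul_right_cancel₀ hne
    push_cast
    linear_combination (-(-1:ZMod p)^k) * key + ((2:ZMod p) + (k : ZMod p)) * ih'

/-- `b k = ((-1)^k C(p-1,k) - 1)/p` -/
def bb (p k : ℕ) : ℤ := ((-1)^k * (((p-1).choose k : ℕ) : ℤ) - 1) / p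

lemma bb_spec (k : ℕ) (hk : k < p) :
    (-1 : ℤ)^k * (((p-1).choose k : ℕ) : ℤ) = 1 + (p : ℤ) * bb p k := by
  have hdvd : (p : ℤ) ∣ ((-1)^k * (((p-1).choose k : ℕ) : ℤ) - 1) := by
    rw [← ZMod.intCast_zmod_eq_zero_iff_dvd]
    push_cast
    linear_combination V1 p k hk
  have h := Int.mul_ediv_cancel' hdvd
  unfold bb
  linarith [h]

/-- partial harmonic sums in `ZMod p` -/
def Hh (p k : ℕ) : ZMod p := ∑ j ∈ range k, ((j : ZMod p) + 1)⁻¹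

lemma bb_mod : ∀ k, k < p → ((bb p k : ℤ) : ZMod p) = - Hh p k := by
  have hp : p.Prime := Fact.out
  intro k
  induction k with
  | zero =>
    intro _
    have : bb p 0 = 0 := by unfold bb; norm_num
    rw [this]
    unfold Hh
    simp
  | succ k ih =>
    intro hk
    have hk' : k < p := by omega
    have hp0 : (p : ℤ) ≠ 0 := by exact_mod_cast hp.pos.ne'
    -- integer recurrence
    have h1 : (((p-1).choose (k+1) : ℕ) : ℤ) * ((k : ℤ) + 1)
        = (((p-1).choose k : ℕ) : ℤ) * ((p : ℤ) - 1 - k) := by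
      have key := congrArg (fun t : ℕ => (t : ℤ)) (Nat.choose_succ_right_eq (p-1) k)
      simp only [Nat.cast_mul] at key
      have hc : ((p - 1 - k : ℕ) : ℤ) = (p : ℤ) - 1 - k := by
        have h2 : p - 1 - k = p - (1 + k) := by omega
        rw [h2, Nat.cast_sub (by omega : 1 + k ≤ p)]
        push_cast
        ring
      rw [hc] at key
      push_cast at key
      linarith [key]
    have e1 := bb_spec p k hk'
    have e2 := bb_spec p (k+1) hk
    have key : (p : ℤ) * (((k : ℤ) + 1) * bb p (k+1) - ((k : ℤ) + 1) * bb p k + 1 + (p:ℤ) * bb p k) = 0 := by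
      linear_combination ((-1:ℤ)^(k+1)) * h1 - ((p:ℤ) - 1 - k) * e1 - ((k:ℤ) + 1) * e2
    have rec_int : ((k : ℤ) + 1) * bb p (k+1) - ((k : ℤ) + 1) * bb p k + 1 + (p:ℤ) * bb p k = 0 :=
      (mul_eq_zero.mp key).resolve_left hp0
    -- cast to ZMod p
    have recz := congrArg (fun t : ℤ => (t : ZMod p)) rec_int
    push_cast at recz
    rw [ZMod.natCast_self] at recz
    have hne : ((k : ZMod p) + 1) ≠ 0 := by
      have := nat_ne_zero p (k := k+1) (by omega) hk
      push_cast at this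
      exact this
    have hinv : ((k : ZMod p) + 1) * ((k : ZMod p) + 1)⁻¹ = 1 := mul_inv_cancel₀ hne
    have hH : Hh p (k+1) = Hh p k + ((k : ZMod p) + 1)⁻¹ := Finset.sum_range_succ _ k
    have ih' := ih hk'
    apply mul_left_cancel₀ hne
    rw [hH]
    linear_combination recz + ((k : ZMod p) + 1) * ih' + hinv

lemma sumH_aux : ∀ m, m ≤ p - 1 →
    ∑ k ∈ range m, Hh p k = (m : ZMod p) * Hh p m - (m : ZMod p) := by
  intro m
  induction m with
  | zero => intro _; simp
  | succ m ih =>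
    intro hm
    have hm' : m ≤ p - 1 := by omega
    have hp : p.Prime := Fact.out
    have hne : ((m : ZMod p) + 1) ≠ 0 := by
      have := nat_ne_zero p (k := m+1) (by omega) (by have := hp.two_le; omega)
      push_cast at this
      exact this
    have hinv : ((m : ZMod p) + 1) * ((m : ZMod p) + 1)⁻¹ = 1 := mul_inv_cancel₀ hne
    have hH : Hh p (m+1) = Hh p m + ((m : ZMod p) + 1)⁻¹ := Finset.sum_range_succ _ m
    rw [Finset.sum_range_succ, ih hm', hH]
    push_cast
    linear_combination (-1 : ZMod p) * hinv

lemma sumH : ∑ k ∈ range p, Hh p k = 1 := by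
  have hp : p.Prime := Fact.out
  have hrange : range p = range ((p-1) + 1) := by
    have := hp.one_le
    congr 1
    omega
  rw [hrange, Finset.sum_range_succ, sumH_aux p (p-1) le_rfl,
    cast_p_sub p 1 hp.one_le]
  push_cast
  ring

lemma sumKH_aux (h2ne : (2 : ZMod p) ≠ 0) : ∀ m, m ≤ p - 1 →
    ∑ k ∈ range m, (k : ZMod p) * Hh p k
      = ((m * (m-1) : ℕ) : ZMod p) * (2 : ZMod p)⁻¹ * Hh p m
        - ((m * (m-1) : ℕ) : ZMod p) * (2 : ZMod p)⁻¹ * (2 : ZMod p)⁻¹ := by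
  intro m
  induction m with
  | zero => intro _; simp
  | succ m ih =>
    intro hm
    have hm' : m ≤ p - 1 := by omega
    have hp : p.Prime := Fact.out
    have hne : ((m : ZMod p) + 1) ≠ 0 := by
      have := nat_ne_zero p (k := m+1) (by omega) (by have := hp.two_le; omega)
      push_cast at this
      exact this
    have hinv : ((m : ZMod p) + 1) * ((m : ZMod p) + 1)⁻¹ = 1 := mul_inv_cancel₀ hne
    have hH : Hh p (m+1) = Hh p m + ((m : ZMod p) + 1)⁻¹ := Finset.sum_range_succ _ m
    rcases Nat.eq_zero_or_pos m with hm0 | hm0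
    · subst hm0
      simp [Hh]
    · have hc1 : ((m * (m-1) : ℕ) : ZMod p) = (m : ZMod p) * ((m : ZMod p) - 1) := by
        rw [Nat.cast_mul, Nat.cast_sub hm0]
        push_cast
        ring
      have hc2 : (((m+1) * (m+1-1) : ℕ) : ZMod p) = ((m : ZMod p) + 1) * (m : ZMod p) := by
        have h3 : m + 1 - 1 = m := by omega
        rw [h3, Nat.cast_mul]
        push_cast
        ring
      rw [Finset.sum_range_succ, ih hm', hH, hc1, hc2]
      have h2q : (2 : ZMod p) * (2 : ZMod p)⁻¹ = 1 := mul_inv_cancel₀ h2ne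
      linear_combination (-(((m:ZMod p)) * (2:ZMod p)⁻¹)) * hinv
        + (((m:ZMod p)) * (2:ZMod p)⁻¹ - (m:ZMod p) * Hh p m) * h2q

lemma sumKH (h2ne : (2 : ZMod p) ≠ 0) :
    ∑ k ∈ range p, (k : ZMod p) * Hh p k = -(2 : ZMod p)⁻¹ := by
  have hp : p.Prime := Fact.out
  have hp2 := hp.two_le
  have hrange : range p = range ((p-1) + 1) := by
    have := hp.one_le
    congr 1
    omega
  rw [hrange, Finset.sum_range_succ, sumKH_aux p h2ne (p-1) le_rfl,
    cast_p_sub p 1 hp.one_le]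
  have hc : ((p - 1) * (p - 1 - 1) : ℕ) = (p-1) * (p-2) := by
    rw [show p - 1 - 1 = p - 2 from by omega]
  have hc2 : (((p-1) * (p-2) : ℕ) : ZMod p) = 2 := by
    rw [Nat.cast_mul, cast_p_sub p 1 hp.one_le, cast_p_sub p 2 hp2]
    norm_num
  rw [hc, hc2]
  have h2q : (2 : ZMod p) * (2 : ZMod p)⁻¹ = 1 := mul_inv_cancel₀ h2ne
  linear_combination (Hh p (p-1) - (2:ZMod p)⁻¹) * h2q

end Arith


section Main

variable (p : ℕ) [Fact p.Prime]

lemma T_p2_mod (hp3 : 3 ≤ p) (x : ZMod p) : ((T p (p-2) x : ℤ) : ZMod p) = 1 + x := by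
  haveI : NeZero p := ⟨by omega⟩
  have expand : T p (p-2) x = ∑ k ∈ range (p-2+1), g p k x * (((p-2).choose k : ℕ) : ℤ) := rfl
  have hrange : range p = range ((p - 2 + 1) + 1) := by
    congr 1
    omega
  have h1 : ∑ k ∈ range p, g p k x * (((p-2).choose k : ℕ) : ℤ) = T p (p-2) x := by
    rw [hrange, Finset.sum_range_succ,
      Nat.choose_eq_zero_of_lt (by omega : p - 2 < p - 2 + 1), expand]
    push_cast
    ring
  rw [← h1]
  push_cast
  have step : ∀ k ∈ range p,
      (((g p k x : ℤ) : ZMod p)) * (((p-2).choose k : ℕ) : ZMod p)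
        = if ((k : ZMod p) = x) then (x + 1) else 0 := by
    intro k hk
    unfold g
    split_ifs with hcond
    · push_cast
      rw [← hcond]
      linear_combination V2 p k (Finset.mem_range.mp hk)
    · push_cast
      ring
  rw [Finset.sum_congr rfl step]
  rw [Finset.sum_eq_single_of_mem x.val (Finset.mem_range.mpr (ZMod.val_lt x))]
  · rw [if_pos (ZMod.natCast_rightInverse x)]
    ring
  · intro b hb hbx
    rw [if_neg]
    intro hcond
    exact hbx (by rw [← ZMod.val_natCast_of_lt (Finset.mem_range.mp hb), hcond])

lemma master (hodd : Odd p) : ∀ s : ℕ, 1 ≤ s → ∃ h : ZMod p → ℤ,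
    (∀ x, T p ((p-1)*s - 1) x = (p:ℤ)^(s-1) * h x) ∧
    (∀ x : ZMod p, ((h x : ℤ) : ZMod p)
      = (-1)^(s-1) * (((s : ZMod p) + 1) * (2 : ZMod p)⁻¹ + x)) := by
  have hp : p.Prime := Fact.out
  have hp3 : 3 ≤ p := by
    rcases hodd with ⟨t, ht⟩
    have := hp.two_le
    omega
  haveI : NeZero p := ⟨by omega⟩
  have h2ne : (2 : ZMod p) ≠ 0 := by
    have h := nat_ne_zero p (k := 2) (by norm_num) (by omega)
    push_cast at h
    exact h
  have h2q : (2 : ZMod p) * (2 : ZMod p)⁻¹ = 1 := mul_inv_cancel₀ h2ne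
  refine Nat.le_induction ?_ ?_
  · -- base case s = 1
    refine ⟨T p (p-2), fun x => ?_, fun x => ?_⟩
    · rw [show (p-1) * 1 - 1 = p - 2 from by omega]
      ring
    · rw [T_p2_mod p hp3 x]
      push_cast
      linear_combination (-1 : ZMod p) * h2q
  · -- inductive step
    rintro s hs ⟨h, hfac, hmod⟩
    have hbig : 2 ≤ (p-1) * s := le_trans (by omega) (Nat.le_mul_of_pos_right (p-1) hs)
    refine ⟨fun x => ∑ k ∈ range p, bb p k * h (x - (k : ZMod p)), fun x => ?_, fun x => ?_⟩
    · -- factorization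
      have haug : ∑ y : ZMod p, h y = 0 := by
        have h1 : ∑ y : ZMod p, T p ((p-1)*s - 1) y = 0 := by
          obtain ⟨m, hm⟩ : ∃ m, (p-1)*s - 1 = m + 1 := ⟨(p-1)*s - 2, by omega⟩
          rw [hm]
          exact sum_T p m
        have h2 : (p:ℤ)^(s-1) * ∑ y : ZMod p, h y = 0 := by
          rw [Finset.mul_sum, ← h1]
          exact Finset.sum_congr rfl fun y _ => (hfac y).symm
        have hpne : ((p:ℤ))^(s-1) ≠ 0 := pow_ne_zero _ (by exact_mod_cast hp.pos.ne')
        exact (mul_eq_zero.mp h2).resolve_left hpne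
      have harith : (p-1)*(s+1) - 1 = ((p-1)*s - 1) + (p-1) := by
        rw [Nat.mul_succ]
        omega
      have hfun : T p ((p-1)*s - 1) = fun y => (p:ℤ)^(s-1) * h y := funext hfac
      rw [harith, T_add p (p-1) ((p-1)*s - 1), hfun,
        D_iterate p (p-1) (fun y => (p:ℤ)^(s-1) * h y) x]
      rw [show p - 1 + 1 = p from by omega]
      have step1 : ∀ k ∈ range p,
          (-1)^k * (((p-1).choose k : ℕ) : ℤ) * ((p:ℤ)^(s-1) * h (x - (k : ZMod p)))
            = (p:ℤ)^(s-1) * h (x - (k : ZMod p))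
              + ((p:ℤ)^(s-1) * (p:ℤ)) * (bb p k * h (x - (k : ZMod p))) := by
        intro k hk
        rw [bb_spec p k (Finset.mem_range.mp hk)]
        ring
      rw [Finset.sum_congr rfl step1, Finset.sum_add_distrib, ← Finset.mul_sum, ← Finset.mul_sum]
      rw [sum_shift p h x, haug, mul_zero, zero_add]
      have hpow : (p:ℤ)^(s+1-1) = (p:ℤ)^(s-1) * (p:ℤ) := by
        rw [show s + 1 - 1 = (s-1) + 1 from by omega, pow_succ]
      rw [hpow]
    · -- mod p value
      push_cast
      have step2 : ∀ k ∈ range p,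
          ((bb p k : ℤ) : ZMod p) * ((h (x - (k : ZMod p)) : ℤ) : ZMod p)
            = (-((-1 : ZMod p)^(s-1) * (((s : ZMod p) + 1) * (2:ZMod p)⁻¹ + x))) * Hh p k
              + (-1 : ZMod p)^(s-1) * ((k : ZMod p) * Hh p k) := by
        intro k hk
        rw [bb_mod p k (Finset.mem_range.mp hk), hmod (x - (k : ZMod p))]
        ring
      rw [Finset.sum_congr rfl step2, Finset.sum_add_distrib, ← Finset.mul_sum, ← Finset.mul_sum]
      rw [sumH p, sumKH p h2ne]
      have hs1 : s = (s - 1) + 1 := by omega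
      have hspow : (-1 : ZMod p)^s = (-1 : ZMod p)^(s-1) * (-1) := by
        conv_lhs => rw [hs1]
        rw [pow_succ]
      rw [hspow]
      ring

end Main

end Stmt12

theorem stmt12 (p s : ℕ) (r : ℤ) (hp : p.Prime) (hodd : Odd p) (hs : 1 ≤ s) :
    ((S1 p ((p - 1) * s - 1) r : ℤ) : ZMod p) =
      (-1) ^ (s - 1) * (((s : ZMod p) + 1) * (2 : ZMod p)⁻¹ + (r : ZMod p)) := by
  haveI : Fact p.Prime := ⟨hp⟩
  have hp3 : 3 ≤ p := by
    rcases hodd with ⟨t, ht⟩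
    have := hp.two_le
    omega
  obtain ⟨h, hfac, hmod⟩ := Stmt12.master p hodd s hs
  have hbig : 2 ≤ (p-1) * s := le_trans (by omega) (Nat.le_mul_of_pos_right (p-1) hs)
  have hdiv : ((p-1)*s - 1 - 1) / (p - 1) = s - 1 := by
    have h2 : (s - 1) * (p - 1) = (p-1)*s - (p-1) := by
      rw [Nat.sub_mul, one_mul, mul_comm]
    have h3 : (s - 1 + 1) * (p - 1) = (p-1)*s := by
      rw [Nat.sub_add_cancel hs, mul_comm]
    apply Nat.div_eq_of_lt_le
    · rw [h2]; omega
    · rw [h3]; omega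
  have hS1 : S1 p ((p-1)*s - 1) r = h ((r : ℤ) : ZMod p) := by
    unfold S1
    rw [hdiv, Stmt12.S1sum_eq_T, hfac]
    exact Int.mul_ediv_cancel_left _ (pow_ne_zero _ (by exact_mod_cast hp.pos.ne'))
  rw [hS1, hmod]
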